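/- arXiv:1807.07030 — 2 statements merged into one kernel-verified Lean document; each statement's English description precedes it below -/
import Mathlib

section
/- Let G be a finite simple graph and B ⊆ V(G). Then th_⌊Z⌋(G;B) = min{ th_Z(H;B) : H is a spanning supergraph of G }. -/
open SimpleGraph

namespace ZFT

variable {V : Type*} {α : Type*} {β : Type*}

/-! ### Standard zero forcing (simultaneous propagation) -/

/-- One round of simultaneous standard zero forcing: a blue vertex forces its
unique white neighbor. -/
def zStep (G : SimpleGraph V) (S : Set V) : Set V :=
  S ∪ {w | ∃ u ∈ S, G.Adj u w ∧ ∀ x, G.Adj u x → x ∉ S → x = w}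

/-- `B` is a standard zero forcing set of `G`. -/
def IsZeroForcingSet (G : SimpleGraph V) (B : Set V) : Prop :=
  ∃ t : ℕ, (zStep G)^[t] B = Set.univ

/-- The standard propagation time `pt_Z(G;B)` (`⊤` if `B` is not a zero forcing set). -/
noncomputable def ptZ (G : SimpleGraph V) (B : Set V) : ℕ∞ :=
  sInf {n : ℕ∞ | ∃ t : ℕ, n = t ∧ (zStep G)^[t] B = Set.univ}

/-- The standard throttling number `th_Z(G;B) = |B| + pt_Z(G;B)`. -/
noncomputable def thZ (G : SimpleGraph V) (B : Set V) : ℕ∞ :=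
  (B.ncard : ℕ∞) + ptZ G B

/-- The standard throttling number `th_Z(G)`. -/
noncomputable def thZgraph (G : SimpleGraph V) : ℕ∞ :=
  sInf {n : ℕ∞ | ∃ B : Set V, IsZeroForcingSet G B ∧ n = thZ G B}

/-- The standard zero forcing number `Z(G)`. -/
noncomputable def Znum (G : SimpleGraph V) : ℕ :=
  sInf {k : ℕ | ∃ B : Set V, IsZeroForcingSet G B ∧ B.ncard = k}

/-- The standard propagation time `pt_Z(G)`, minimized over minimum zero forcing sets. -/
noncomputable def ptZgraph (G : SimpleGraph V) : ℕ∞ :=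
  sInf {n : ℕ∞ | ∃ B : Set V, IsZeroForcingSet G B ∧ B.ncard = Znum G ∧ n = ptZ G B}

/-! ### Sets of standard forces -/

/-- Validity of a single standard force `u → w` when `blue` is the blue set. -/
def zForceValid (G : SimpleGraph V) (blue : Set V) (u w : V) : Prop :=
  u ∈ blue ∧ w ∉ blue ∧ G.Adj u w ∧ ∀ x, G.Adj u x → x ∉ blue → x = w

/-- Validity of a chronological list of standard forces starting from a blue set. -/
def zValidList (G : SimpleGraph V) : Set V → List (V × V) → Prop
  | _, [] => True
  | blue, p :: L => zForceValid G blue p.1 p.2 ∧ zValidList G (insert p.2 blue) L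

/-- The blue set after performing all forces in a list, starting from `B`. -/
def endBlue (B : Set V) (L : List (V × V)) : Set V :=
  B ∪ {w | ∃ u, (u, w) ∈ L}

/-- The set of vertices that have performed a force in a list. -/
def endForced (L : List (V × V)) : Set V := {u | ∃ w, (u, w) ∈ L}

/-- `F` is a set of standard forces of `B` in `G` (recorded from a maximal
chronological list of forces). -/
def IsZForceSet (G : SimpleGraph V) (B : Set V) (F : Set (V × V)) : Prop :=
  ∃ L : List (V × V), zValidList G B L ∧
    (∀ u w, ¬ zForceValid G (endBlue B L) u w) ∧ F = {p | p ∈ L}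

/-- The set of blue vertices at time `t` when the forces of `F` are performed at the
earliest possible time steps, starting from `B` blue. -/
def zBlueAt (G : SimpleGraph V) (F : Set (V × V)) (B : Set V) : ℕ → Set V
  | 0 => B
  | t + 1 =>
      zBlueAt G F B t ∪ {w | ∃ v, (v, w) ∈ F ∧ zForceValid G (zBlueAt G F B t) v w}

/-- The standard propagation time `pt_Z(G;F)` of a set of forces `F` of `B`. -/
noncomputable def ptZofF (G : SimpleGraph V) (F : Set (V × V)) (B : Set V) : ℕ∞ :=
  sInf {n : ℕ∞ | ∃ t : ℕ, n = t ∧ zBlueAt G F B t = Set.univ}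

/-! ### `⌊Z⌋` (minor monotone floor) forcing -/

/-- Validity of a single `⌊Z⌋` force `u → w`: `u` is blue and has not yet forced, `w`
is white, and either `w` is the unique white neighbor of `u`, or all neighbors of `u`
are blue (a hop). -/
def zfForceValid (G : SimpleGraph V) (blue forced : Set V) (u w : V) : Prop :=
  u ∈ blue ∧ w ∉ blue ∧ u ∉ forced ∧
    ((G.Adj u w ∧ ∀ x, G.Adj u x → x ∉ blue → x = w) ∨ ∀ x, G.Adj u x → x ∈ blue)

/-- Validity of a chronological list of `⌊Z⌋` forces. -/
def zfValidList (G : SimpleGraph V) : Set V → Set V → List (V × V) → Prop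
  | _, _, [] => True
  | blue, forced, p :: L =>
      zfForceValid G blue forced p.1 p.2 ∧
        zfValidList G (insert p.2 blue) (insert p.1 forced) L

/-- `F` is a set of `⌊Z⌋` forces of `B` in `G` (recorded from a maximal chronological
list of `⌊Z⌋` forces starting with `B` blue). -/
def IsZFForceSet (G : SimpleGraph V) (B : Set V) (F : Set (V × V)) : Prop :=
  ∃ L : List (V × V), zfValidList G B ∅ L ∧
    (∀ u w, ¬ zfForceValid G (endBlue B L) (endForced L) u w) ∧ F = {p | p ∈ L}

/-- The set of blue vertices at time `t` when the `⌊Z⌋` forces of `F` are performed at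
the earliest possible time steps, starting from `B` blue. -/
def zfBlueAt (G : SimpleGraph V) (F : Set (V × V)) (B : Set V) : ℕ → Set V
  | 0 => B
  | t + 1 =>
      zfBlueAt G F B t ∪
        {w | ∃ v, (v, w) ∈ F ∧ v ∈ zfBlueAt G F B t ∧ w ∉ zfBlueAt G F B t ∧
          (∀ w', (v, w') ∈ F → w' ∈ zfBlueAt G F B t → w' ∈ B) ∧
          ((G.Adj v w ∧ ∀ x, G.Adj v x → x ∉ zfBlueAt G F B t → x = w) ∨
            ∀ x, G.Adj v x → x ∈ zfBlueAt G F B t)}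

/-- The `⌊Z⌋` propagation time `pt_⌊Z⌋(G;F)` of a set of `⌊Z⌋` forces `F` of `B`. -/
noncomputable def ptZFofF (G : SimpleGraph V) (F : Set (V × V)) (B : Set V) : ℕ∞ :=
  sInf {n : ℕ∞ | ∃ t : ℕ, n = t ∧ zfBlueAt G F B t = Set.univ}

/-- The `⌊Z⌋` propagation time `pt_⌊Z⌋(G;B)`, minimized over sets of `⌊Z⌋` forces of `B`. -/
noncomputable def ptZF (G : SimpleGraph V) (B : Set V) : ℕ∞ :=
  sInf {n : ℕ∞ | ∃ F : Set (V × V), IsZFForceSet G B F ∧ n = ptZFofF G F B}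

/-- The `⌊Z⌋` throttling number `th_⌊Z⌋(G;B) = |B| + pt_⌊Z⌋(G;B)`. -/
noncomputable def thZF (G : SimpleGraph V) (B : Set V) : ℕ∞ :=
  (B.ncard : ℕ∞) + ptZF G B

/-- The `⌊Z⌋` throttling number `th_⌊Z⌋(G)`, minimized over all `B ⊆ V(G)`. -/
noncomputable def thZFgraph (G : SimpleGraph V) : ℕ∞ :=
  sInf {n : ℕ∞ | ∃ B : Set V, n = thZF G B}

/-- `B` is a `⌊Z⌋` forcing set of `G`. -/
def IsZFForcingSet (G : SimpleGraph V) (B : Set V) : Prop :=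
  ∃ F : Set (V × V), IsZFForceSet G B F ∧ B ∪ {w | ∃ u, (u, w) ∈ F} = Set.univ

/-- The `⌊Z⌋` forcing number `⌊Z⌋(G)`. -/
noncomputable def ZFnum (G : SimpleGraph V) : ℕ :=
  sInf {k : ℕ | ∃ B : Set V, IsZFForcingSet G B ∧ B.ncard = k}

/-- The `⌊Z⌋` propagation time `pt_⌊Z⌋(G)`, minimized over minimum `⌊Z⌋` forcing sets. -/
noncomputable def ptZFgraph (G : SimpleGraph V) : ℕ∞ :=
  sInf {n : ℕ∞ | ∃ B : Set V, IsZFForcingSet G B ∧ B.ncard = ZFnum G ∧ n = ptZF G B}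

/-! ### Contractions, minors, and products -/

/-- The graph obtained from `H` by contracting (all) the edges in `C`: its vertices are
the connected components of the spanning subgraph of `H` with edge set `C ∩ E(H)`, and
two distinct components are adjacent iff `H` has an edge between them. -/
def contractEdges (H : SimpleGraph α) (C : Set (Sym2 α)) :
    SimpleGraph (SimpleGraph.fromEdgeSet C ⊓ H).ConnectedComponent where
  Adj c d := c ≠ d ∧ ∃ a b, H.Adj a b ∧
      (SimpleGraph.fromEdgeSet C ⊓ H).connectedComponentMk a = c ∧
      (SimpleGraph.fromEdgeSet C ⊓ H).connectedComponentMk b = d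
  symm := by
    constructor
    rintro c d ⟨hcd, a, b, hab, ha, hb⟩
    exact ⟨hcd.symm, b, a, hab.symm, hb, ha⟩
  loopless := ⟨fun c h => h.1 rfl⟩

/-- `G` is a minor of `H`: `G` is isomorphic to a subgraph of a graph obtained from an
induced subgraph of `H` by contracting a set of edges. -/
def IsMinor (G : SimpleGraph β) (H : SimpleGraph α) : Prop :=
  ∃ (s : Set α) (C : Set (Sym2 s))
    (G'' : SimpleGraph (SimpleGraph.fromEdgeSet C ⊓ H.induce s).ConnectedComponent),
      G'' ≤ contractEdges (H.induce s) C ∧ Nonempty (G ≃g G'')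

/-- The Cartesian product `K_a □ P_{b+1}`. -/
def prodKP (a b : ℕ) : SimpleGraph (Fin a × Fin (b + 1)) :=
  (⊤ : SimpleGraph (Fin a)) □ SimpleGraph.pathGraph (b + 1)

/-- The path edges of `K_a □ P_{b+1}` (edges within the copies of `P_{b+1}`). -/
def pathEdges (a b : ℕ) : Set (Sym2 (Fin a × Fin (b + 1))) :=
  {e | ∃ (i : Fin a) (j j' : Fin (b + 1)),
    (SimpleGraph.pathGraph (b + 1)).Adj j j' ∧ e = s((i, j), (i, j'))}

/-- The complete edges of `K_a □ P_{b+1}` (edges within the copies of `K_a`). -/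
def completeEdges (a b : ℕ) : Set (Sym2 (Fin a × Fin (b + 1))) :=
  {e | ∃ (i i' : Fin a) (j : Fin (b + 1)), i ≠ i' ∧ e = s((i, j), (i', j))}

/-- The star `K_{1,n-1}` on `n` vertices: vertex `0` is adjacent to all others. -/
def starGraph (n : ℕ) : SimpleGraph (Fin n) where
  Adj i j := i ≠ j ∧ ((i : ℕ) = 0 ∨ (j : ℕ) = 0)
  symm := by constructor; rintro i j ⟨h1, h2⟩; exact ⟨h1.symm, h2.symm⟩
  loopless := ⟨fun i h => h.1 rfl⟩

/-- The independence number `α(G)`. -/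
noncomputable def indepNum (G : SimpleGraph V) : ℕ :=
  sSup {k : ℕ | ∃ s : Set V, (∀ a ∈ s, ∀ b ∈ s, a ≠ b → ¬ G.Adj a b) ∧ s.ncard = k}



/-! ### Auxiliary lemmas for the proof -/

section Aux

lemma enat_sInf_mem {S : Set ℕ∞} (h : S.Nonempty) : sInf S ∈ S := by
  obtain ⟨m, hm, hmin⟩ := wellFounded_lt.has_min S h
  have : sInf S = m := le_antisymm (sInf_le hm) (le_sInf fun x hx => not_lt.1 (hmin x hx))
  rw [this]; exact hm

lemma subset_zStep (G : SimpleGraph V) (S : Set V) : S ⊆ zStep G S := Set.subset_union_left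

lemma zStep_iter_mono (G : SimpleGraph V) (B : Set V) {r s : ℕ} (h : r ≤ s) :
    (zStep G)^[r] B ⊆ (zStep G)^[s] B := by
  induction h with
  | refl => exact subset_rfl
  | step h ih =>
      rw [Function.iterate_succ_apply']
      exact ih.trans (subset_zStep G _)

lemma zfBlueAt_mono (G : SimpleGraph V) (F : Set (V × V)) (B : Set V) {r s : ℕ} (h : r ≤ s) :
    zfBlueAt G F B r ⊆ zfBlueAt G F B s := by
  induction h with
  | refl => exact subset_rfl
  | step h ih => exact ih.trans Set.subset_union_left

lemma zfValidList_facts (G : SimpleGraph V) :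
    ∀ (L : List (V × V)) (blue forced : Set V), zfValidList G blue forced L →
      (∀ p ∈ L, p.1 ∉ forced ∧ p.2 ∉ blue ∧ p.1 ≠ p.2) ∧
      List.Pairwise (fun p q : V × V => p.1 ≠ q.1 ∧ p.2 ≠ q.2) L := by
  intro L
  induction L with
  | nil => intro _ _ _; exact ⟨by simp, List.Pairwise.nil⟩
  | cons p L ih =>
    intro blue forced hv
    obtain ⟨hp, hL⟩ := hv
    obtain ⟨hmem, hpw⟩ := ih _ _ hL
    constructor
    · rintro q hq
      rcases List.mem_cons.mp hq with rfl | hq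
      · exact ⟨hp.2.2.1, hp.2.1, fun h => hp.2.1 (h ▸ hp.1)⟩
      · obtain ⟨h1, h2, h3⟩ := hmem q hq
        exact ⟨fun h => h1 (Set.mem_insert_of_mem _ h),
          fun h => h2 (Set.mem_insert_of_mem _ h), h3⟩
    · refine List.Pairwise.cons ?_ hpw
      intro q hq
      obtain ⟨h1, h2, _⟩ := hmem q hq
      constructor
      · intro h; exact h1 (by rw [← h]; exact Set.mem_insert _ _)
      · intro h; exact h2 (by rw [← h]; exact Set.mem_insert _ _)

lemma pairwise_src_unique {L : List (V × V)}
    (hpw : List.Pairwise (fun p q : V × V => p.1 ≠ q.1 ∧ p.2 ≠ q.2) L)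
    {u w w' : V} (h1 : (u, w) ∈ L) (h2 : (u, w') ∈ L) : w = w' := by
  by_contra hne
  have hne' : ((u, w) : V × V) ≠ (u, w') := by simp [hne]
  haveI : Std.Symm (fun p q : V × V => p.1 ≠ q.1 ∧ p.2 ≠ q.2) :=
    ⟨by rintro ⟨a,b⟩ ⟨c,d⟩ ⟨h1,h2⟩; exact ⟨h1.symm, h2.symm⟩⟩
  have := hpw.forall h1 h2 hne'
  exact this.1 rfl

lemma pairwise_tgt_unique {L : List (V × V)}
    (hpw : List.Pairwise (fun p q : V × V => p.1 ≠ q.1 ∧ p.2 ≠ q.2) L)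
    {u u' w : V} (h1 : (u, w) ∈ L) (h2 : (u', w) ∈ L) : u = u' := by
  by_contra hne
  have hne' : ((u, w) : V × V) ≠ (u', w) := by simp [hne]
  haveI : Std.Symm (fun p q : V × V => p.1 ≠ q.1 ∧ p.2 ≠ q.2) :=
    ⟨by rintro ⟨a,b⟩ ⟨c,d⟩ ⟨h1,h2⟩; exact ⟨h1.symm, h2.symm⟩⟩
  have := hpw.forall h1 h2 hne'
  exact this.2 rfl

lemma zfValidList_append (G : SimpleGraph V) :
    ∀ (L M : List (V × V)) (blue forced : Set V),
      zfValidList G blue forced L →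
      zfValidList G (blue ∪ {w | ∃ u, (u, w) ∈ L}) (forced ∪ {u | ∃ w, (u, w) ∈ L}) M →
      zfValidList G blue forced (L ++ M) := by
  intro L
  induction L with
  | nil =>
    intro M blue forced _ hM
    have e1 : {w | ∃ u, (u, w) ∈ ([] : List (V × V))} = ∅ := by simp
    have e2 : {u | ∃ w, (u, w) ∈ ([] : List (V × V))} = ∅ := by simp
    rw [e1, e2, Set.union_empty, Set.union_empty] at hM
    simpa using hM
  | cons p L ih =>
    intro M blue forced hL hM
    obtain ⟨hp, hL'⟩ := hL
    refine ⟨hp, ih M _ _ hL' ?_⟩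
    have e1 : insert p.2 blue ∪ {w | ∃ u, (u, w) ∈ L}
        = blue ∪ {w | ∃ u, (u, w) ∈ p :: L} := by
      ext x
      simp only [Set.mem_union, Set.mem_insert_iff, Set.mem_setOf_eq, List.mem_cons,
        Prod.ext_iff]
      constructor
      · rintro ((rfl | h) | ⟨u, hu⟩)
        · exact Or.inr ⟨p.1, Or.inl ⟨rfl, rfl⟩⟩
        · exact Or.inl h
        · exact Or.inr ⟨u, Or.inr hu⟩
      · rintro (h | ⟨u, (⟨h1, h2⟩ | h)⟩)
        · exact Or.inl (Or.inr h)
        · exact Or.inl (Or.inl h2)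
        · exact Or.inr ⟨u, h⟩
    have e2 : insert p.1 forced ∪ {u | ∃ w, (u, w) ∈ L}
        = forced ∪ {u | ∃ w, (u, w) ∈ p :: L} := by
      ext x
      simp only [Set.mem_union, Set.mem_insert_iff, Set.mem_setOf_eq, List.mem_cons,
        Prod.ext_iff]
      constructor
      · rintro ((rfl | h) | ⟨w, hw⟩)
        · exact Or.inr ⟨p.2, Or.inl ⟨rfl, rfl⟩⟩
        · exact Or.inl h
        · exact Or.inr ⟨w, Or.inr hw⟩
      · rintro (h | ⟨w, (⟨h1, h2⟩ | h)⟩)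
        · exact Or.inl (Or.inr h)
        · exact Or.inl (Or.inl h1)
        · exact Or.inr ⟨w, h⟩
    rw [e1, e2]; exact hM

/-- From standard forcing in a supergraph `H` build a `⌊Z⌋` force set of `G` that is
at least as fast. -/
lemma exists_zf_of_zstep {V : Type*} [Fintype V] (G H : SimpleGraph V) (hGH : G ≤ H)
    (B : Set V) (t : ℕ) (ht : (zStep H)^[t] B = Set.univ) :
    ∃ F : Set (V × V), IsZFForceSet G B F ∧ zfBlueAt G F B t = Set.univ := by
  classical
  set T : ℕ → Set V := fun s => (zStep H)^[s] B with hTdef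
  have hT0 : T 0 = B := rfl
  have hTsucc : ∀ s, T (s+1) = zStep H (T s) := fun s => Function.iterate_succ_apply' _ _ _
  have hTmono : ∀ {r s : ℕ}, r ≤ s → T r ⊆ T s := fun h => zStep_iter_mono H B h
  have key : ∀ s : ℕ, ∃ L : List (V × V), zfValidList G B ∅ L ∧
      endBlue B L = T s ∧
      ∀ p ∈ L, ∃ r, p.2 ∈ T (r+1) ∧ zForceValid H (T r) p.1 p.2 := by
    intro s
    induction s with
    | zero =>
      refine ⟨[], trivial, ?_, by simp⟩
      show B ∪ {w | ∃ u, (u, w) ∈ ([] : List (V × V))} = T 0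
      rw [hT0]
      simp
    | succ s ih =>
      obtain ⟨L, hLv, hLb, hLt⟩ := ih
      have hchoice : ∀ w : V, ∃ v : V, w ∈ T (s+1) \ T s → zForceValid H (T s) v w := by
        intro w
        by_cases hw : w ∈ T (s+1) \ T s
        · obtain ⟨hw1, hw2⟩ := hw
          rw [hTsucc] at hw1
          rcases hw1 with h | ⟨v, hv1, hv2, hv3⟩
          · exact absurd h hw2
          · exact ⟨v, fun _ => ⟨hv1, hw2, hv2, hv3⟩⟩
        · exact ⟨w, fun h => absurd h hw⟩
      choose u hu using hchoice
      set N : Set V := T (s+1) \ T s with hN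
      have huinj : ∀ w ∈ N, ∀ w' ∈ N, u w = u w' → w = w' := by
        intro w hw w' hw' he
        have h1 := hu w hw
        have h2 := hu w' hw'
        have hadj : H.Adj (u w) w' := by rw [he]; exact h2.2.2.1
        exact (h1.2.2.2 w' hadj h2.2.1).symm
      have hsrc : ∀ p ∈ L, ∀ x, H.Adj p.1 x → x ∈ T s := by
        intro p hp x hx
        obtain ⟨r, hr1, hr2⟩ := hLt p hp
        have hp2Ts : p.2 ∈ T s := by
          rw [← hLb]; exact Set.mem_union_right _ ⟨p.1, hp⟩
        have hrs : r + 1 ≤ s := by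
          by_contra hc
          push_neg at hc
          exact hr2.2.1 (hTmono (by omega : s ≤ r) hp2Ts)
        by_cases hxr : x ∈ T r
        · exact hTmono (by omega : r ≤ s) hxr
        · have hxw := hr2.2.2.2 x hx hxr
          rw [hxw]
          exact hTmono hrs hr1
      have hufresh : ∀ w ∈ N, ∀ p ∈ L, u w ≠ p.1 := by
        intro w hw p hp he
        have h1 := hu w hw
        have hadj : H.Adj p.1 w := by rw [← he]; exact h1.2.2.1
        exact hw.2 (hsrc p hp w hadj)
      set ws : List V := (Set.toFinite N).toFinset.toList with hws
      have hws_nd : ws.Nodup := Finset.nodup_toList _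
      have hws_mem : ∀ w, w ∈ ws ↔ w ∈ N := by
        intro w; rw [hws, Finset.mem_toList, Set.Finite.mem_toFinset]
      set block : List (V × V) := ws.map (fun w => (u w, w)) with hblock
      have block_valid : ∀ (l : List V), l.Nodup → (∀ w ∈ l, w ∈ N) →
          ∀ blue forced : Set V, T s ⊆ blue → (∀ w ∈ l, w ∉ blue) →
          (∀ w ∈ l, u w ∉ forced) →
          zfValidList G blue forced (l.map fun w => (u w, w)) := by
        intro l
        induction l with
        | nil => intros; trivial
        | cons w l ihl =>
          intro hnd hmem blue forced hTb hwb huf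
          have hwN : w ∈ N := hmem w List.mem_cons_self
          have hv := hu w hwN
          refine ⟨⟨hTb hv.1, hwb w List.mem_cons_self,
              huf w List.mem_cons_self, ?_⟩, ?_⟩
          · by_cases hadj : G.Adj (u w) w
            · exact Or.inl ⟨hadj, fun x hx hxb =>
                hv.2.2.2 x (hGH hx) fun hxT => hxb (hTb hxT)⟩
            · refine Or.inr fun x hx => ?_
              by_cases hxT : x ∈ T s
              · exact hTb hxT
              · have hxw := hv.2.2.2 x (hGH hx) hxT
                rw [hxw] at hx
                exact absurd hx hadj
          · refine ihl (List.nodup_cons.mp hnd).2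
              (fun x hx => hmem x (List.mem_cons_of_mem _ hx))
              (insert w blue) (insert (u w) forced)
              (fun y hy => Set.mem_insert_of_mem _ (hTb hy)) ?_ ?_
            · intro x hx hc
              rcases Set.mem_insert_iff.mp hc with he | hm
              · exact (List.nodup_cons.mp hnd).1 (he ▸ hx)
              · exact hwb x (List.mem_cons_of_mem _ hx) hm
            · intro x hx hc
              rcases Set.mem_insert_iff.mp hc with he | hm
              · have hxw : x = w :=
                  huinj x (hmem x (List.mem_cons_of_mem _ hx)) w hwN he
                exact (List.nodup_cons.mp hnd).1 (hxw ▸ hx)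
              · exact huf x (List.mem_cons_of_mem _ hx) hm
      refine ⟨L ++ block, ?_, ?_, ?_⟩
      · refine zfValidList_append G L block B ∅ hLv ?_
        refine block_valid ws hws_nd (fun w hw => (hws_mem w).mp hw)
          (B ∪ {w | ∃ v, (v, w) ∈ L}) (∅ ∪ {v | ∃ w, (v, w) ∈ L}) ?_ ?_ ?_
        · rw [show (B ∪ {w | ∃ v, (v, w) ∈ L}) = T s from hLb]
        · intro w hw hc
          rw [show (B ∪ {w | ∃ v, (v, w) ∈ L}) = T s from hLb] at hc
          exact ((hws_mem w).mp hw).2 hc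
        · intro w hw hc
          rcases (Set.mem_union _ _ _).mp hc with h | ⟨w', hw'⟩
          · exact h
          · exact hufresh w ((hws_mem w).mp hw) (u w, w') hw' rfl
      · have etgt : {w | ∃ v, (v, w) ∈ L ++ block} = {w | ∃ v, (v, w) ∈ L} ∪ N := by
          ext w
          simp only [Set.mem_setOf_eq, List.mem_append, Set.mem_union]
          constructor
          · rintro ⟨v, h | h⟩
            · exact Or.inl ⟨v, h⟩
            · right
              rw [hblock] at h
              obtain ⟨w', hw', he⟩ := List.mem_map.mp h
              obtain ⟨he1, he2⟩ := Prod.mk.injEq _ _ _ _ ▸ he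
              rw [← he2]
              exact (hws_mem w').mp hw'
          · rintro (⟨v, h⟩ | h)
            · exact ⟨v, Or.inl h⟩
            · exact ⟨u w, Or.inr (List.mem_map.mpr ⟨w, (hws_mem w).mpr h, rfl⟩)⟩
        show B ∪ {w | ∃ v, (v, w) ∈ L ++ block} = T (s+1)
        rw [etgt, ← Set.union_assoc, show (B ∪ {w | ∃ v, (v, w) ∈ L}) = T s from hLb, hN]
        exact Set.union_diff_cancel (hTmono (Nat.le_succ s))
      · intro p hp
        rcases List.mem_append.mp hp with h | h
        · exact hLt p h
        · rw [hblock] at h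
          obtain ⟨w', hw', he⟩ := List.mem_map.mp h
          have hwN : w' ∈ N := (hws_mem w').mp hw'
          rw [← he]
          exact ⟨s, hwN.1, hu w' hwN⟩
  obtain ⟨L, hLv, hLb, hLt⟩ := key t
  have hLbu : endBlue B L = Set.univ := by
    rw [hLb]; exact ht
  refine ⟨{p | p ∈ L}, ⟨L, hLv, ?_, rfl⟩, ?_⟩
  · intro v w hv
    have h2 := hv.2.1
    rw [hLbu] at h2
    exact h2 (Set.mem_univ w)
  · obtain ⟨hmemf, hpw⟩ := zfValidList_facts G L B ∅ hLv
    have timing : ∀ s, T s ⊆ zfBlueAt G {p | p ∈ L} B s := by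
      intro s
      induction s with
      | zero => exact subset_rfl
      | succ s ihs =>
        intro w hw
        by_cases hwS : w ∈ zfBlueAt G {p | p ∈ L} B s
        · exact Set.mem_union_left _ hwS
        · have hwTs : w ∉ T s := fun h => hwS (ihs h)
          have hwB : w ∉ B := fun h => hwTs (hTmono (Nat.zero_le s) h)
          have hwend : w ∈ endBlue B L := by rw [hLbu]; exact Set.mem_univ w
          rcases (Set.mem_union _ _ _).mp hwend with h | hsw
          · exact absurd h hwB
          obtain ⟨v, hvL⟩ := hsw
          obtain ⟨r, hr1, hr2⟩ := hLt (v, w) hvL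
          have hrs : r = s := by
            by_contra hne
            rcases Nat.lt_or_ge r s with h | h
            · exact hwTs (hTmono (by omega : r + 1 ≤ s) hr1)
            · exact hr2.2.1 (hTmono (by omega : s + 1 ≤ r) hw)
          rw [hrs] at hr2
          refine Set.mem_union_right _ ⟨v, hvL, ihs hr2.1, hwS, ?_, ?_⟩
          · intro w' hw' hw's
            have hww : w' = w := pairwise_src_unique hpw hw' hvL
            exact absurd (hww ▸ hw's) hwS
          · by_cases hadj : G.Adj v w
            · exact Or.inl ⟨hadj, fun x hx hxs =>
                hr2.2.2.2 x (hGH hx) fun hxT => hxs (ihs hxT)⟩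
            · refine Or.inr fun x hx => ?_
              by_cases hxT : x ∈ T s
              · exact ihs hxT
              · have hxw := hr2.2.2.2 x (hGH hx) hxT
                rw [hxw] at hx
                exact absurd hx hadj
    apply Set.eq_univ_of_univ_subset
    rw [← ht]
    exact timing t

/-- From a `⌊Z⌋` force set of `G` build a spanning supergraph `H` in which standard
forcing is at least as fast. -/
lemma exists_supergraph_of_zf {V : Type*} [Fintype V] (G : SimpleGraph V) (B : Set V)
    (F : Set (V × V)) (hF : IsZFForceSet G B F) (t : ℕ) (ht : zfBlueAt G F B t = Set.univ) :
    ∃ H : SimpleGraph V, G ≤ H ∧ (zStep H)^[t] B = Set.univ := by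
  classical
  obtain ⟨L, hLv, -, rfl⟩ := hF
  set H : SimpleGraph V :=
    SimpleGraph.fromEdgeSet (G.edgeSet ∪ (fun p : V × V => s(p.1, p.2)) '' {p | p ∈ L})
    with hH
  have hGH : G ≤ H := by
    intro a b hab
    rw [hH, SimpleGraph.fromEdgeSet_adj]
    exact ⟨Or.inl hab, hab.ne⟩
  obtain ⟨hmemf, hpw⟩ := zfValidList_facts G L B ∅ hLv
  refine ⟨H, hGH, ?_⟩
  have key : ∀ s : ℕ, zfBlueAt G {p | p ∈ L} B s ⊆ (zStep H)^[s] B ∧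
      ∀ v ∈ zfBlueAt G {p | p ∈ L} B s, v ∉ B →
        ∃ x, (x, v) ∈ L ∧ x ∈ zfBlueAt G {p | p ∈ L} B s := by
    intro s
    induction s with
    | zero => exact ⟨subset_rfl, fun v hv hvB => absurd hv hvB⟩
    | succ s ih =>
      obtain ⟨ihT, ihI⟩ := ih
      have hmono : zfBlueAt G {p | p ∈ L} B s ⊆ zfBlueAt G {p | p ∈ L} B (s+1) :=
        Set.subset_union_left
      constructor
      · intro w hw
        rcases (Set.mem_union _ _ _).mp hw with hws | hnew
        · exact zStep_iter_mono H B (Nat.le_succ s) (ihT hws)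
        · obtain ⟨v, hvF, hvS, hwS, hcl, hdisj⟩ := hnew
          rw [Function.iterate_succ_apply']
          refine Set.mem_union_right _ ⟨v, ihT hvS, ?_, ?_⟩
          · -- H.Adj v w
            rcases hdisj with ⟨hadj, -⟩ | hall
            · exact hGH hadj
            · rw [hH, SimpleGraph.fromEdgeSet_adj]
              refine ⟨Or.inr ⟨(v, w), hvF, rfl⟩, (hmemf (v, w) hvF).2.2⟩
          · intro x hadjx hxT
            have hxS : x ∉ zfBlueAt G {p | p ∈ L} B s := fun h => hxT (ihT h)
            rw [hH, SimpleGraph.fromEdgeSet_adj] at hadjx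
            obtain ⟨hmem', hne⟩ := hadjx
            rcases hmem' with hge | ⟨p, hpL, hps⟩
            · -- G-edge
              have hgadj : G.Adj v x := (SimpleGraph.mem_edgeSet G).mp hge
              rcases hdisj with ⟨-, huniq⟩ | hall
              · exact huniq x hgadj hxS
              · exact absurd (hall x hgadj) hxS
            · -- force-edge
              rcases Sym2.eq_iff.mp hps with ⟨he1, he2⟩ | ⟨he1, he2⟩
              · -- (v, x) ∈ L
                have hvx : (v, x) ∈ L := by
                  have : p = (v, x) := Prod.ext he1 he2
                  rw [← this]; exact hpL
                exact pairwise_src_unique hpw hvx hvF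
              · -- (x, v) ∈ L
                have hxv : (x, v) ∈ L := by
                  have : p = (x, v) := Prod.ext he1 he2
                  rw [← this]; exact hpL
                have hvB : v ∉ B := (hmemf (x, v) hxv).2.1
                obtain ⟨y, hyL, hyS⟩ := ihI v hvS hvB
                have hyx : y = x := pairwise_tgt_unique hpw hyL hxv
                exact absurd (hyx ▸ hyS) hxS
      · intro v hv hvB
        rcases (Set.mem_union _ _ _).mp hv with hvs | hnew
        · obtain ⟨x, hxL, hxS⟩ := ihI v hvs hvB
          exact ⟨x, hxL, hmono hxS⟩
        · obtain ⟨x, hxF, hxS, -, -, -⟩ := hnew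
          exact ⟨x, hxF, hmono hxS⟩
  apply Set.eq_univ_of_univ_subset
  rw [← ht]
  exact (key t).1

end Aux

/-- `th_⌊Z⌋(G;B) = min{ th_Z(H;B) : H a spanning supergraph of G }`. -/
theorem stmt2 {V : Type*} [Fintype V] (G : SimpleGraph V) (B : Set V) :
    thZF G B = sInf {n : ℕ∞ | ∃ H : SimpleGraph V, G ≤ H ∧ n = thZ H B} := by
  classical
  apply le_antisymm
  · -- thZF G B ≤ every thZ H B
    apply le_sInf
    rintro n ⟨H, hGH, rfl⟩
    by_cases hfin : ∃ t : ℕ, (zStep H)^[t] B = Set.univ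
    · have hne : {n : ℕ∞ | ∃ t : ℕ, n = t ∧ (zStep H)^[t] B = Set.univ}.Nonempty := by
        obtain ⟨t, ht⟩ := hfin
        exact ⟨t, t, rfl, ht⟩
      obtain ⟨t, hteq, htu⟩ := enat_sInf_mem hne
      obtain ⟨F, hF, hS⟩ := exists_zf_of_zstep G H hGH B t htu
      have h1 : ptZFofF G F B ≤ (t : ℕ∞) := sInf_le ⟨t, rfl, hS⟩
      have h2 : ptZF G B ≤ ptZFofF G F B := sInf_le ⟨F, hF, rfl⟩
      have h3 : ptZ H B = (t : ℕ∞) := hteq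
      calc thZF G B = (B.ncard : ℕ∞) + ptZF G B := rfl
        _ ≤ (B.ncard : ℕ∞) + (t : ℕ∞) := add_le_add le_rfl (h2.trans h1)
        _ = (B.ncard : ℕ∞) + ptZ H B := by rw [h3]
        _ = thZ H B := rfl
    · have : ptZ H B = ⊤ := by
        rw [ptZ]
        rw [show {n : ℕ∞ | ∃ t : ℕ, n = t ∧ (zStep H)^[t] B = Set.univ} = ∅ from ?_, sInf_empty]
        rw [Set.eq_empty_iff_forall_notMem]
        rintro n ⟨t, -, ht⟩
        exact hfin ⟨t, ht⟩
      have : thZ H B = ⊤ := by rw [thZ, this, add_top]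
      rw [this]
      exact le_top
  · -- some thZ H B ≤ thZF G B
    by_cases htop : ptZF G B = ⊤
    · have : thZF G B = ⊤ := by rw [thZF, htop, add_top]
      rw [this]
      exact le_top
    · have hne : {n : ℕ∞ | ∃ F : Set (V × V), IsZFForceSet G B F ∧ n = ptZFofF G F B}.Nonempty := by
        by_contra hc
        rw [Set.not_nonempty_iff_eq_empty] at hc
        exact htop (by rw [ptZF, hc, sInf_empty])
      obtain ⟨F, hF, hFeq⟩ := enat_sInf_mem hne
      have hptF : ptZFofF G F B = ptZF G B := hFeq.symm
      have hptF_ne : ptZFofF G F B ≠ ⊤ := by rw [hptF]; exact htop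
      have hne2 : {n : ℕ∞ | ∃ t : ℕ, n = t ∧ zfBlueAt G F B t = Set.univ}.Nonempty := by
        by_contra hc
        rw [Set.not_nonempty_iff_eq_empty] at hc
        exact hptF_ne (by rw [ptZFofF, hc, sInf_empty])
      obtain ⟨t, hteq, htu⟩ := enat_sInf_mem hne2
      obtain ⟨H, hGH, hHt⟩ := exists_supergraph_of_zf G B F hF t htu
      have h1 : ptZ H B ≤ (t : ℕ∞) := sInf_le ⟨t, rfl, hHt⟩
      have h2 : sInf {n : ℕ∞ | ∃ H : SimpleGraph V, G ≤ H ∧ n = thZ H B} ≤ thZ H B :=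
        sInf_le ⟨H, hGH, rfl⟩
      refine le_trans h2 ?_
      calc thZ H B = (B.ncard : ℕ∞) + ptZ H B := rfl
        _ ≤ (B.ncard : ℕ∞) + (t : ℕ∞) := add_le_add le_rfl h1
        _ = (B.ncard : ℕ∞) + ptZFofF G F B := by rw [← hteq]; rfl
        _ = (B.ncard : ℕ∞) + ptZF G B := by rw [hptF]
        _ = thZF G B := rfl

end ZFT
end

section
/- If G is a finite simple graph of order n with th_⌊Z⌋(G) = n, then the independence number of G satisfies α(G) ≤ 3. -/
open SimpleGraph

namespace ZFT

variable {V : Type*} {α : Type*} {β : Type*}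

/-- if `th_⌊Z⌋(G) = n` (the order of `G`), then `α(G) ≤ 3`. -/
theorem stmt18 {V : Type*} [Fintype V] (G : SimpleGraph V)
    (h : thZFgraph G = (Fintype.card V : ℕ∞)) :
    indepNum G ≤ 3 := by
  classical
  by_contra hcon
  push_neg at hcon
  unfold indepNum at hcon
  set S := {k : ℕ | ∃ s : Set V, (∀ a ∈ s, ∀ b ∈ s, a ≠ b → ¬ G.Adj a b) ∧ s.ncard = k}
    with hSdef
  have hbdd : BddAbove S := by
    refine ⟨Fintype.card V, ?_⟩
    rintro k ⟨s, -, rfl⟩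
    calc s.ncard ≤ (Set.univ : Set V).ncard :=
          Set.ncard_le_ncard (Set.subset_univ s) Set.finite_univ
      _ = Fintype.card V := by rw [Set.ncard_univ, Nat.card_eq_fintype_card]
  have hne : S.Nonempty := ⟨0, ∅, by simp, by simp⟩
  have hmem : sSup S ∈ S := Nat.sSup_mem hne hbdd
  obtain ⟨s, hindep, hcard⟩ := hmem
  have h4 : 4 ≤ s.ncard := by rw [hcard]; omega
  have hfs : s.Finite := Set.toFinite s
  obtain ⟨a, ha⟩ : s.Nonempty := Set.nonempty_of_ncard_ne_zero (by omega)
  have h3 : 3 ≤ (s \ {a}).ncard := by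
    rw [Set.ncard_diff_singleton_of_mem ha]; omega
  obtain ⟨b, hb⟩ : (s \ {a}).Nonempty := Set.nonempty_of_ncard_ne_zero (by omega)
  have h2 : 2 ≤ (((s \ {a}) \ {b})).ncard := by
    rw [Set.ncard_diff_singleton_of_mem hb]; omega
  obtain ⟨c, hc⟩ : (((s \ {a}) \ {b})).Nonempty := Set.nonempty_of_ncard_ne_zero (by omega)
  have h1 : 1 ≤ ((((s \ {a}) \ {b}) \ {c})).ncard := by
    rw [Set.ncard_diff_singleton_of_mem hc]; omega
  obtain ⟨d, hd⟩ : ((((s \ {a}) \ {b}) \ {c})).Nonempty :=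
    Set.nonempty_of_ncard_ne_zero (by omega)
  have has : a ∈ s := ha
  have hbs : b ∈ s := hb.1
  have hcs : c ∈ s := hc.1.1
  have hds : d ∈ s := hd.1.1.1
  have hba : b ≠ a := hb.2
  have hca : c ≠ a := hc.1.2
  have hcb : c ≠ b := hc.2
  have hda : d ≠ a := hd.1.1.2
  have hdb : d ≠ b := hd.1.2
  have hdc : d ≠ c := hd.2
  have hac : ¬ G.Adj a c := hindep a has c hcs (Ne.symm hca)
  have had : ¬ G.Adj a d := hindep a has d hds (Ne.symm hda)
  have hbc : ¬ G.Adj b c := hindep b hbs c hcs (Ne.symm hcb)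
  have hbd : ¬ G.Adj b d := hindep b hbs d hds (Ne.symm hdb)
  set B : Set V := ({c, d} : Set V)ᶜ with hBdef
  have memB : ∀ x : V, x ∈ B ↔ x ≠ c ∧ x ≠ d := by
    intro x; simp [hBdef, not_or]
  have haB : a ∈ B := (memB a).2 ⟨Ne.symm hca, Ne.symm hda⟩
  have hbB : b ∈ B := (memB b).2 ⟨Ne.symm hcb, Ne.symm hdb⟩
  have hcB : c ∉ B := fun hx => (((memB c).1 hx).1) rfl
  have hdB : d ∉ B := fun hx => (((memB d).1 hx).2) rfl
  set L : List (V × V) := [(a, c), (b, d)] with hLdef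
  set F : Set (V × V) := {p | p ∈ L} with hFdef
  have hacF : (a, c) ∈ F := by simp [hFdef, hLdef]
  have hbdF : (b, d) ∈ F := by simp [hFdef, hLdef]
  -- validity of the list of forces
  have hvalid : zfValidList G B ∅ L := by
    refine ⟨⟨haB, hcB, Set.notMem_empty a, Or.inr ?_⟩,
      ⟨Set.mem_insert_of_mem _ hbB, ?_, ?_, Or.inr ?_⟩, trivial⟩
    · intro x hx
      exact (memB x).2 ⟨fun hxc => hac (hxc ▸ hx), fun hxd => had (hxd ▸ hx)⟩
    · intro hmem
      rcases hmem with h' | h'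
      · exact hdc h'
      · exact hdB h'
    · intro hmem
      rcases hmem with h' | h'
      · exact hba h'
      · exact h'
    · intro x hx
      by_cases hxc : x = c
      · exact hxc ▸ Set.mem_insert _ _
      · refine Set.mem_insert_of_mem _ ((memB x).2 ⟨hxc, fun hxd => hbd (hxd ▸ hx)⟩)
  -- after the forces, everything is blue
  have hend : endBlue B L = Set.univ := by
    ext x
    simp only [Set.mem_univ, iff_true, endBlue, Set.mem_union, Set.mem_setOf_eq]
    by_cases hx : x ∈ B
    · exact Or.inl hx
    · right
      rcases (not_and_or.mp ((memB x).not.1 hx)) with h' | h'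
      · push_neg at h'
        exact ⟨a, by simp [hLdef, h']⟩
      · push_neg at h'
        exact ⟨b, by simp [hLdef, h']⟩
  have hmax : ∀ u w, ¬ zfForceValid G (endBlue B L) (endForced L) u w := by
    intro u w hw
    exact hw.2.1 (hend ▸ Set.mem_univ w)
  have hFset : IsZFForceSet G B F := ⟨L, hvalid, hmax, rfl⟩
  -- at time 1 everything is blue
  have hblue1 : zfBlueAt G F B 1 = Set.univ := by
    ext x
    simp only [Set.mem_univ, iff_true]
    show x ∈ zfBlueAt G F B 0 ∪ _
    by_cases hx : x ∈ B
    · exact Or.inl hx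
    · right
      rcases (not_and_or.mp ((memB x).not.1 hx)) with h' | h'
      · push_neg at h'
        subst h'
        refine ⟨a, hacF, haB, hcB, fun w' _ hw' => hw', Or.inr ?_⟩
        intro y hy
        exact (memB y).2 ⟨fun hyc => hac (hyc ▸ hy), fun hyd => had (hyd ▸ hy)⟩
      · push_neg at h'
        subst h'
        refine ⟨b, hbdF, hbB, hdB, fun w' _ hw' => hw', Or.inr ?_⟩
        intro y hy
        exact (memB y).2 ⟨fun hyc => hbc (hyc ▸ hy), fun hyd => hbd (hyd ▸ hy)⟩
  have hptF : ptZFofF G F B ≤ 1 :=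
    sInf_le ⟨1, by simp, hblue1⟩
  have hpt : ptZF G B ≤ 1 :=
    le_trans (sInf_le ⟨F, hFset, rfl⟩) hptF
  have hncsum : 2 + B.ncard = Fintype.card V := by
    have h2c : ({c, d} : Set V).ncard = 2 := Set.ncard_pair (Ne.symm hdc)
    have := Set.ncard_add_ncard_compl ({c, d} : Set V)
    rw [h2c, Nat.card_eq_fintype_card] at this
    exact this
  have hfinal : (Fintype.card V : ℕ∞) ≤ ((Fintype.card V - 2 + 1 : ℕ) : ℕ∞) := by
    calc (Fintype.card V : ℕ∞) = thZFgraph G := h.symm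
      _ ≤ thZF G B := sInf_le ⟨B, rfl⟩
      _ = (B.ncard : ℕ∞) + ptZF G B := rfl
      _ ≤ ((Fintype.card V - 2 : ℕ) : ℕ∞) + 1 := by
          have : B.ncard = Fintype.card V - 2 := by omega
          rw [this]; exact add_le_add_right hpt _
      _ = ((Fintype.card V - 2 + 1 : ℕ) : ℕ∞) := by push_cast; ring
  have hle : Fintype.card V ≤ Fintype.card V - 2 + 1 := Nat.cast_le.mp hfinal
  omega

end ZFT
end
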